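/- Let A, B, X be bounded operators on a complex Hilbert space H with A, B positive, let 0 ≤ α ≤ 1, r ≥ 2, and set r₀ = min{α, 1-α}. Then for every unit vector k ∈ H, |⟨A^α X B^(1-α) k, k⟩|^r ≤ ‖X‖^r · (⟨(α A^r + (1-α) B^r) k, k⟩ − r₀·(⟨A^r k, k⟩^(1/2) − ⟨B^r k, k⟩^(1/2))²). -/

import Mathlib

open scoped InnerProductSpace
open ContinuousLinearMap Complex

variable {H : Type*} [NormedAddCommGroup H] [InnerProductSpace ℂ H] [CompleteSpace H]

/-- `T ^ e` for a (positive) operator `T`, via the continuous functional calculus. -/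
noncomputable def opow (T : H →L[ℂ] H) (e : ℝ) : H →L[ℂ] H :=
  cfc (fun t : ℝ => t ^ e) T

section ScalarLemmas

/-- Continuity of rpow with nonneg exponent. -/
lemma aux_rpow_contOn (e : ℝ) (he : 0 ≤ e) (s : Set ℝ) :
    ContinuousOn (fun t : ℝ => t ^ e) s :=
  fun x _ => (Real.continuousAt_rpow_const x e (Or.inr he)).continuousWithinAt

/-- Linearized Young inequality: `s ^ μ ≤ μ c^(μ-1) s + (1-μ) c^μ`. -/
lemma aux_scalar_young {μ c s : ℝ} (hμ0 : 0 ≤ μ) (hμ1 : μ ≤ 1) (hc : 0 < c) (hs : 0 ≤ s) :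
    s ^ μ ≤ μ * c ^ (μ - 1) * s + (1 - μ) * c ^ μ := by
  have hsc : 0 ≤ s / c := div_nonneg hs hc.le
  have h1 : s ^ μ = c ^ μ * (s / c) ^ μ := by
    rw [← Real.mul_rpow hc.le hsc, mul_div_cancel₀ _ hc.ne']
  have h2 : (s / c) ^ μ ≤ μ * (s / c) + (1 - μ) := by
    calc (s / c) ^ μ = (s / c) ^ μ * (1 : ℝ) ^ (1 - μ) := by rw [Real.one_rpow, mul_one]
      _ ≤ μ * (s / c) + (1 - μ) * 1 :=
          Real.geom_mean_le_arith_mean2_weighted hμ0 (by linarith) hsc zero_le_one (by ring)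
      _ = μ * (s / c) + (1 - μ) := by ring
  have hcμ : (0:ℝ) ≤ c ^ μ := Real.rpow_nonneg hc.le μ
  have h3 : c ^ μ * (s / c) = c ^ (μ - 1) * s := by
    rw [Real.rpow_sub_one hc.ne' μ]
    field_simp
  calc s ^ μ = c ^ μ * (s / c) ^ μ := h1
    _ ≤ c ^ μ * (μ * (s / c) + (1 - μ)) := by
        exact mul_le_mul_of_nonneg_left h2 hcμ
    _ = μ * (c ^ μ * (s / c)) + (1 - μ) * c ^ μ := by ring
    _ = μ * c ^ (μ - 1) * s + (1 - μ) * c ^ μ := by rw [h3]; ring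

/-- Half case of the refined Young inequality. -/
lemma aux_young_refined_half {a b α : ℝ} (ha : 0 ≤ a) (hb : 0 ≤ b) (hα0 : 0 ≤ α)
    (hα : 2 * α ≤ 1) :
    a ^ α * b ^ (1 - α) ≤ α * a + (1 - α) * b - α * (Real.sqrt a - Real.sqrt b) ^ 2 := by
  have hsab : (0:ℝ) ≤ Real.sqrt a * Real.sqrt b :=
    mul_nonneg (Real.sqrt_nonneg a) (Real.sqrt_nonneg b)
  have h1 : a ^ α * b ^ (1 - α) = (Real.sqrt a * Real.sqrt b) ^ (2 * α) * b ^ (1 - 2 * α) := by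
    have hb1 : b ^ α * b ^ (1 - 2 * α) = b ^ (1 - α) := by
      rw [← Real.rpow_add' hb (by intro h; linarith)]
      congr 1; ring
    rw [Real.mul_rpow (Real.sqrt_nonneg a) (Real.sqrt_nonneg b)]
    rw [Real.sqrt_eq_rpow a, Real.sqrt_eq_rpow b, ← Real.rpow_mul ha, ← Real.rpow_mul hb]
    have e1 : 1 / 2 * (2 * α) = α := by ring
    rw [e1, mul_assoc, hb1]
  have key : a ^ α * b ^ (1 - α) ≤ (2 * α) * (Real.sqrt a * Real.sqrt b) + (1 - 2 * α) * b := by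
    rw [h1]
    exact Real.geom_mean_le_arith_mean2_weighted (by linarith) (by linarith) hsab hb (by ring)
  have hs : (Real.sqrt a - Real.sqrt b) ^ 2 = a + b - 2 * (Real.sqrt a * Real.sqrt b) := by
    rw [sub_sq, Real.sq_sqrt ha, Real.sq_sqrt hb]; ring
  rw [hs]; linarith

/-- Refined Young inequality (Kittaneh–Manasrah). -/
lemma aux_young_refined {a b α : ℝ} (ha : 0 ≤ a) (hb : 0 ≤ b) (hα0 : 0 ≤ α) (hα1 : α ≤ 1) :
    a ^ α * b ^ (1 - α) ≤
      α * a + (1 - α) * b - min α (1 - α) * (Real.sqrt a - Real.sqrt b) ^ 2 := by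
  rcases le_total (2 * α) 1 with h | h
  · rw [min_eq_left (by linarith)]
    exact aux_young_refined_half ha hb hα0 h
  · rw [min_eq_right (by linarith)]
    have h2 := aux_young_refined_half hb ha (α := 1 - α) (by linarith) (by linarith)
    have e1 : 1 - (1 - α) = α := by ring
    rw [e1] at h2
    have e2 : (Real.sqrt b - Real.sqrt a) ^ 2 = (Real.sqrt a - Real.sqrt b) ^ 2 := by ring
    rw [e2] at h2
    calc a ^ α * b ^ (1 - α) = b ^ (1 - α) * a ^ α := by ring
      _ ≤ (1 - α) * b + α * a - (1 - α) * (Real.sqrt a - Real.sqrt b) ^ 2 := h2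
      _ = α * a + (1 - α) * b - (1 - α) * (Real.sqrt a - Real.sqrt b) ^ 2 := by ring

end ScalarLemmas

section OperatorLemmas

lemma aux_re_inner_smul (r : ℝ) (x y : H) : (⟪r • x, y⟫_ℂ).re = r * (⟪x, y⟫_ℂ).re := by
  rw [RCLike.real_smul_eq_coe_smul (K := ℂ), inner_smul_left]
  simp

lemma aux_inner_re_mono {A B : H →L[ℂ] H} (h : A ≤ B) (k : H) :
    (⟪A k, k⟫_ℂ).re ≤ (⟪B k, k⟫_ℂ).re := by
  have := (h : (B - A).IsPositive).inner_nonneg_left k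
  simp only [reApplyInnerSelf, sub_apply, inner_sub_left, map_sub, RCLike.re_to_complex] at this
  have h2 := (Complex.le_def.mp this).1
  simp only [Complex.zero_re, Complex.sub_re] at h2
  linarith

lemma aux_opow_nonneg (A : H →L[ℂ] H) (hA : A.IsPositive) (e : ℝ) :
    (0 : H →L[ℂ] H) ≤ opow A e := by
  have h0 : (0 : H →L[ℂ] H) ≤ A := (A.nonneg_iff_isPositive).mpr hA
  exact cfc_nonneg fun x hx =>
    Real.rpow_nonneg (spectrum_nonneg_of_nonneg h0 hx) e

lemma aux_inner_opow_nonneg (A : H →L[ℂ] H) (hA : A.IsPositive) (e : ℝ) (k : H) :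
    0 ≤ (⟪opow A e k, k⟫_ℂ).re := by
  have := ((opow A e).nonneg_iff_isPositive.mp (aux_opow_nonneg A hA e)).inner_nonneg_left k
  simpa [reApplyInnerSelf, RCLike.re_to_complex] using (Complex.le_def.mp this).1

lemma aux_opow_selfAdjoint (A : H →L[ℂ] H) (e : ℝ) : IsSelfAdjoint (opow A e) :=
  cfc_predicate _ A

/-- `⟪A^(2e) k, k⟫.re = ‖A^e k‖²`. -/
lemma aux_inner_opow_sq (A : H →L[ℂ] H) (hA : A.IsPositive) (e : ℝ) (he : 0 ≤ e) (k : H) :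
    (⟪opow A (2 * e) k, k⟫_ℂ).re = ‖opow A e k‖ ^ 2 := by
  have h0 : (0 : H →L[ℂ] H) ≤ A := (A.nonneg_iff_isPositive).mpr hA
  have hmul : opow A (2 * e) = opow A e * opow A e := by
    unfold opow
    rw [← cfc_mul _ _ A (aux_rpow_contOn e he _) (aux_rpow_contOn e he _)]
    apply cfc_congr
    intro x hx
    have hx0 : 0 ≤ x := spectrum_nonneg_of_nonneg h0 hx
    show x ^ (2 * e) = x ^ e * x ^ e
    rcases eq_or_lt_of_le he with h0e | h0e
    · simp [← h0e]
    · have h2e : 2 * e = e + e := by ring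
      rw [h2e, Real.rpow_add' hx0 (by positivity)]
  have hadj : ContinuousLinearMap.adjoint (opow A e) = opow A e :=
    ContinuousLinearMap.isSelfAdjoint_iff'.mp (aux_opow_selfAdjoint A e)
  rw [hmul]
  have : (opow A e * opow A e) k = opow A e (opow A e k) := rfl
  rw [this]
  conv_lhs => rw [← hadj]
  rw [ContinuousLinearMap.adjoint_inner_left, hadj]
  have := @inner_self_eq_norm_sq ℂ _ _ _ _ (opow A e k)
  simpa [RCLike.re_to_complex] using this

/-- McCarthy-type inequality: `⟪A^θ k, k⟫.re ≤ (⟪A^p k, k⟫.re) ^ (θ/p)` for a unit vector `k`. -/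
lemma aux_mccarthy (A : H →L[ℂ] H) (hA : A.IsPositive) {θ p : ℝ} (hθ : 0 ≤ θ) (hθp : θ ≤ p)
    (hp : 0 < p) (k : H) (hk : ‖k‖ = 1) :
    (⟪opow A θ k, k⟫_ℂ).re ≤ ((⟪opow A p k, k⟫_ℂ).re) ^ (θ / p) := by
  have h0 : (0 : H →L[ℂ] H) ≤ A := (A.nonneg_iff_isPositive).mpr hA
  have hkk : (⟪k, k⟫_ℂ).re = 1 := by
    have := @inner_self_eq_norm_sq ℂ _ _ _ _ k
    simp [RCLike.re_to_complex] at this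
    rw [inner_self_eq_norm_sq_to_K, hk]; norm_num
  set a := (⟪opow A p k, k⟫_ℂ).re with ha_def
  have ha0 : 0 ≤ a := aux_inner_opow_nonneg A hA p k
  rcases eq_or_lt_of_le hθ with hθ0 | hθ0
  · -- θ = 0
    have h1 : opow A θ = 1 := by
      unfold opow
      have : (fun t : ℝ => t ^ θ) = fun _ : ℝ => (1:ℝ) := by
        funext t; rw [← hθ0, Real.rpow_zero]
      rw [this]
      exact cfc_const_one ℝ A hA.isSelfAdjoint
    rw [h1, ← hθ0]
    simp only [zero_div, Real.rpow_zero, ContinuousLinearMap.one_apply]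
    rw [hkk]
  · -- θ > 0
    set μ := θ / p with hμ_def
    have hμ0 : 0 < μ := div_pos hθ0 hp
    have hμ1 : μ ≤ 1 := by
      rw [hμ_def, div_le_one hp]; exact hθp
    have hθeq : θ = p * μ := by
      rw [hμ_def]; field_simp
    -- key: for every c > 0 we have the linear bound
    have key : ∀ c : ℝ, 0 < c →
        (⟪opow A θ k, k⟫_ℂ).re ≤ μ * c ^ (μ - 1) * a + (1 - μ) * c ^ μ := by
      intro c hc
      have hcont1 : ContinuousOn (fun t : ℝ => μ * c ^ (μ - 1) * t ^ p) (spectrum ℝ A) :=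
        continuousOn_const.mul (aux_rpow_contOn p hp.le _)
      have hle : opow A θ ≤ cfc (fun t : ℝ => μ * c ^ (μ - 1) * t ^ p + (1 - μ) * c ^ μ) A := by
        unfold opow
        apply cfc_mono (fun x hx => ?_) (aux_rpow_contOn θ hθ _)
          (hcont1.add continuousOn_const)
        have hx0 : 0 ≤ x := spectrum_nonneg_of_nonneg h0 hx
        have hxp : 0 ≤ x ^ p := Real.rpow_nonneg hx0 p
        have := aux_scalar_young hμ0.le hμ1 hc hxp
        calc x ^ θ = (x ^ p) ^ μ := by rw [hθeq, Real.rpow_mul hx0]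
          _ ≤ μ * c ^ (μ - 1) * x ^ p + (1 - μ) * c ^ μ := this
      have hsplit : cfc (fun t : ℝ => μ * c ^ (μ - 1) * t ^ p + (1 - μ) * c ^ μ) A
          = (μ * c ^ (μ - 1)) • opow A p + ((1 - μ) * c ^ μ) • (1 : H →L[ℂ] H) := by
        unfold opow
        rw [cfc_add A _ _ hcont1 continuousOn_const,
          cfc_const_mul (μ * c ^ (μ - 1)) (fun t : ℝ => t ^ p) A (aux_rpow_contOn p hp.le _),
          cfc_const ((1 - μ) * c ^ μ) A hA.isSelfAdjoint, Algebra.algebraMap_eq_smul_one]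
      have hmono := aux_inner_re_mono hle k
      rw [hsplit] at hmono
      refine hmono.trans_eq ?_
      simp only [ContinuousLinearMap.add_apply, ContinuousLinearMap.smul_apply,
        ContinuousLinearMap.one_apply, inner_add_left, Complex.add_re, aux_re_inner_smul]
      rw [hkk, ← ha_def]
      ring
    rcases eq_or_lt_of_le ha0 with ha0' | hapos
    · -- a = 0
      rw [← ha0', Real.zero_rpow (by positivity)]
      by_contra hcon
      push_neg at hcon
      rcases eq_or_lt_of_le hμ1 with hμ1' | hμlt
      · -- μ = 1
        have := key 1 one_pos
        rw [← ha0', hμ1'] at this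
        simp at this
        linarith
      · -- μ < 1
        set L := (⟪opow A θ k, k⟫_ℂ).re with hL
        have hL0 : 0 < L := hcon
        set ε := L / 2 with hε
        have hε0 : 0 < ε := by positivity
        have hden : (0:ℝ) < 1 - μ := by linarith
        set c := (ε / (1 - μ)) ^ (1 / μ) with hc_def
        have hc0 : 0 < c := Real.rpow_pos_of_pos (div_pos hε0 hden) _
        have hcμ : c ^ μ = ε / (1 - μ) := by
          rw [hc_def, ← Real.rpow_mul (div_pos hε0 hden).le]
          rw [one_div, inv_mul_cancel₀ hμ0.ne', Real.rpow_one]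
        have hkey := key c hc0
        rw [← ha0', hcμ] at hkey
        have h2 : (1 - μ) * (ε / (1 - μ)) = ε := by
          rw [mul_comm, div_mul_cancel₀ _ hden.ne']
        rw [mul_zero, zero_add, h2] at hkey
        linarith
    · -- a > 0
      have := key a hapos
      have h1 : μ * a ^ (μ - 1) * a = μ * a ^ μ := by
        rw [mul_assoc, ← Real.rpow_add_one hapos.ne' (μ - 1)]
        norm_num
      rw [h1] at this
      calc (⟪opow A θ k, k⟫_ℂ).re ≤ μ * a ^ μ + (1 - μ) * a ^ μ := this
        _ = a ^ μ := by ring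

end OperatorLemmas

theorem berezin_pointwise_refined (A B X : H →L[ℂ] H)
    (hA : A.IsPositive) (hB : B.IsPositive) (α r : ℝ)
    (hα0 : 0 ≤ α) (hα1 : α ≤ 1) (hr : 2 ≤ r) (k : H) (hk : ‖k‖ = 1) :
    ‖⟪(opow A α * X * opow B (1 - α)) k, k⟫_ℂ‖ ^ r ≤
      ‖X‖ ^ r *
        ((⟪(α • opow A r + (1 - α) • opow B r) k, k⟫_ℂ).re -
          min α (1 - α) *
            (Real.sqrt (⟪opow A r k, k⟫_ℂ).re - Real.sqrt (⟪opow B r k, k⟫_ℂ).re) ^ 2) := by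
  have hr0 : (0:ℝ) < r := by linarith
  have hrne : r ≠ 0 := hr0.ne'
  set a := (⟪opow A r k, k⟫_ℂ).re with ha_def
  set b := (⟪opow B r k, k⟫_ℂ).re with hb_def
  have ha0 : 0 ≤ a := aux_inner_opow_nonneg A hA r k
  have hb0 : 0 ≤ b := aux_inner_opow_nonneg B hB r k
  -- Step 1: Cauchy–Schwarz
  have hadj : ContinuousLinearMap.adjoint (opow A α) = opow A α :=
    ContinuousLinearMap.isSelfAdjoint_iff'.mp (aux_opow_selfAdjoint A α)
  have hstep1 : ‖⟪(opow A α * X * opow B (1 - α)) k, k⟫_ℂ‖ ≤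
      ‖X‖ * (‖opow B (1 - α) k‖ * ‖opow A α k‖) := by
    have happ : (opow A α * X * opow B (1 - α)) k = opow A α (X (opow B (1 - α) k)) := rfl
    rw [happ]
    conv_lhs => rw [← hadj]
    rw [ContinuousLinearMap.adjoint_inner_left]
    calc ‖⟪X (opow B (1 - α) k), opow A α k⟫_ℂ‖
        ≤ ‖X (opow B (1 - α) k)‖ * ‖opow A α k‖ := norm_inner_le_norm _ _
      _ ≤ (‖X‖ * ‖opow B (1 - α) k‖) * ‖opow A α k‖ :=
          mul_le_mul_of_nonneg_right (X.le_opNorm _) (norm_nonneg _)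
      _ = ‖X‖ * (‖opow B (1 - α) k‖ * ‖opow A α k‖) := by ring
  -- Step 2: McCarthy bounds on the factors
  have hu : ‖opow A α k‖ ^ 2 ≤ a ^ (2 * α / r) := by
    rw [← aux_inner_opow_sq A hA α hα0 k]
    exact aux_mccarthy A hA (by linarith) (by linarith) hr0 k hk
  have hv : ‖opow B (1 - α) k‖ ^ 2 ≤ b ^ (2 * (1 - α) / r) := by
    rw [← aux_inner_opow_sq B hB (1 - α) (by linarith) k]
    exact aux_mccarthy B hB (by linarith) (by linarith) hr0 k hk
  have hu' : ‖opow A α k‖ ^ r ≤ a ^ α := by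
    have h1 : ‖opow A α k‖ ^ r = (‖opow A α k‖ ^ 2) ^ (r / 2) := by
      rw [← Real.rpow_natCast (‖opow A α k‖) 2, ← Real.rpow_mul (norm_nonneg _)]
      norm_num
      congr 1
      ring
    rw [h1]
    calc (‖opow A α k‖ ^ 2) ^ (r / 2) ≤ (a ^ (2 * α / r)) ^ (r / 2) :=
        Real.rpow_le_rpow (sq_nonneg _) hu (by linarith)
      _ = a ^ α := by
        rw [← Real.rpow_mul ha0]
        congr 1
        field_simp
  have hv' : ‖opow B (1 - α) k‖ ^ r ≤ b ^ (1 - α) := by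
    have h1 : ‖opow B (1 - α) k‖ ^ r = (‖opow B (1 - α) k‖ ^ 2) ^ (r / 2) := by
      rw [← Real.rpow_natCast (‖opow B (1 - α) k‖) 2, ← Real.rpow_mul (norm_nonneg _)]
      norm_num
      congr 1
      ring
    rw [h1]
    calc (‖opow B (1 - α) k‖ ^ 2) ^ (r / 2) ≤ (b ^ (2 * (1 - α) / r)) ^ (r / 2) :=
        Real.rpow_le_rpow (sq_nonneg _) hv (by linarith)
      _ = b ^ (1 - α) := by
        rw [← Real.rpow_mul hb0]
        congr 1
        field_simp
  -- Step 3: raise Cauchy–Schwarz to the power r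
  have h3 : ‖⟪(opow A α * X * opow B (1 - α)) k, k⟫_ℂ‖ ^ r ≤
      ‖X‖ ^ r * (a ^ α * b ^ (1 - α)) := by
    calc ‖⟪(opow A α * X * opow B (1 - α)) k, k⟫_ℂ‖ ^ r
        ≤ (‖X‖ * (‖opow B (1 - α) k‖ * ‖opow A α k‖)) ^ r :=
          Real.rpow_le_rpow (norm_nonneg _) hstep1 hr0.le
      _ = ‖X‖ ^ r * (‖opow B (1 - α) k‖ ^ r * ‖opow A α k‖ ^ r) := by
          rw [Real.mul_rpow (norm_nonneg X) (mul_nonneg (norm_nonneg _) (norm_nonneg _)),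
            Real.mul_rpow (norm_nonneg _) (norm_nonneg _)]
      _ ≤ ‖X‖ ^ r * (b ^ (1 - α) * a ^ α) := by
          apply mul_le_mul_of_nonneg_left _ (Real.rpow_nonneg (norm_nonneg X) r)
          exact mul_le_mul hv' hu' (Real.rpow_nonneg (norm_nonneg _) r)
            (Real.rpow_nonneg hb0 _)
      _ = ‖X‖ ^ r * (a ^ α * b ^ (1 - α)) := by ring
  -- Step 4: refined Young inequality and conclusion
  have hre : (⟪(α • opow A r + (1 - α) • opow B r) k, k⟫_ℂ).re = α * a + (1 - α) * b := by
    simp only [ContinuousLinearMap.add_apply, ContinuousLinearMap.smul_apply, inner_add_left,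
      Complex.add_re, aux_re_inner_smul, ha_def, hb_def]
  rw [hre]
  refine h3.trans ?_
  exact mul_le_mul_of_nonneg_left (aux_young_refined ha0 hb0 hα0 hα1)
    (Real.rpow_nonneg (norm_nonneg X) r)
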